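/- Let u ∈ (0,1), let x_0, …, x_n be real numbers, let 0 ≤ k ≤ n and 0 ≤ m ≤ n, and assume (2n+1)·u < 1. Suppose: (i) for every pair of nonnegative integers (m₁, m₂) with m₁+m₂ = m, k−m₁ ≥ 0 and n−k−m₂ ≥ 0, there are real numbers Ŝ^L(m₁) = Σ_{I ⊆ {0,…,k−1}, |I| = k−m₁} (∏_{i∈I} x_i)(1+θ_I) with each |θ_I| ≤ γ_{2(k−1)−m₁}, and Ŝ^R(m₂) = Σ_{J ⊆ {k+1,…,n}, |J| = n−k−m₂} (∏_{j∈J} x_j)(1+θ_J) with each |θ_J| ≤ γ_{2(n−k−1)−m₂}; and (ii) ŵ' = (−1)^{n−m} Σ_{(m₁,m₂)} Ŝ^L(m₁)·Ŝ^R(m₂)·(1+φ_{m₁,m₂}) for some numbers φ with |φ_{m₁,m₂}| ≤ γ_{m+1}. Then there exist real numbers θ_I, indexed by the (n−m)-element subsets I of {0,…,n}\{k}, with |θ_I| ≤ γ_{2n+1}, such that ŵ' = (−1)^{n−m} Σ_{I ⊆ {0,…,n}\{k}, |I| = n−m} (∏_{i∈I} x_i)·(1+θ_I). -/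

import Mathlib

/-- `γ_k = k·u/(1 − k·u)`, the standard bound for the accumulated relative error of
`k` floating point operations with unit roundoff `u`. -/
noncomputable def gam (u : ℝ) (k : ℕ) : ℝ := k * u / (1 - k * u)

lemma gam_combine {u : ℝ} (hu : 0 < u) {a b c N : ℕ} (habc : a + b + c ≤ N)
    (hN : (N : ℝ) * u < 1) {t1 t2 t3 : ℝ}
    (h1 : |t1| ≤ gam u a) (h2 : |t2| ≤ gam u b) (h3 : |t3| ≤ gam u c) :
    |(1 + t1) * (1 + t2) * (1 + t3) - 1| ≤ gam u N := by
  have hcast : (a : ℝ) + b + c ≤ N := by exact_mod_cast Nat.cast_le.2 habc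
  have hau : (a : ℝ) * u ≤ (N : ℝ) * u := by
    have : (a : ℝ) ≤ N := by exact_mod_cast Nat.cast_le.2 (by omega : a ≤ N)
    nlinarith
  have hbu : (b : ℝ) * u ≤ (N : ℝ) * u := by
    have : (b : ℝ) ≤ N := by exact_mod_cast Nat.cast_le.2 (by omega : b ≤ N)
    nlinarith
  have hcu : (c : ℝ) * u ≤ (N : ℝ) * u := by
    have : (c : ℝ) ≤ N := by exact_mod_cast Nat.cast_le.2 (by omega : c ≤ N)
    nlinarith
  have ha0 : (0:ℝ) ≤ (a : ℝ) * u := by positivity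
  have hb0 : (0:ℝ) ≤ (b : ℝ) * u := by positivity
  have hc0 : (0:ℝ) ≤ (c : ℝ) * u := by positivity
  have hda : (0:ℝ) < 1 - (a:ℝ)*u := by linarith
  have hdb : (0:ℝ) < 1 - (b:ℝ)*u := by linarith
  have hdc : (0:ℝ) < 1 - (c:ℝ)*u := by linarith
  have hdN : (0:ℝ) < 1 - (N:ℝ)*u := by linarith
  set A := gam u a with hAdef
  set B := gam u b with hBdef
  set C := gam u c with hCdef
  have hA0 : 0 ≤ A := div_nonneg ha0 (le_of_lt hda)
  have hB0 : 0 ≤ B := div_nonneg hb0 (le_of_lt hdb)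
  have hC0 : 0 ≤ C := div_nonneg hc0 (le_of_lt hdc)
  have step : ∀ t s E F : ℝ, |t| ≤ E → |s| ≤ F → 0 ≤ E → 0 ≤ F →
      |(1 + t) * (1 + s) - 1| ≤ (1 + E) * (1 + F) - 1 := by
    intro t s E F ht hs hE hF
    have h0 : (1 + t) * (1 + s) - 1 = t + s + t * s := by ring
    rw [h0]
    calc |t + s + t * s| ≤ |t + s| + |t * s| := abs_add_le _ _
      _ ≤ (|t| + |s|) + |t| * |s| := by
          rw [abs_mul]; exact add_le_add (abs_add_le t s) le_rfl
      _ ≤ (E + F) + E * F := by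
          have h1 : |t| * |s| ≤ E * F := by
            exact mul_le_mul ht hs (abs_nonneg s) hE
          linarith
      _ = (1 + E) * (1 + F) - 1 := by ring
  have s12 : |(1 + t1) * (1 + t2) - 1| ≤ (1 + A) * (1 + B) - 1 := step _ _ _ _ h1 h2 hA0 hB0
  have hE2 : (0:ℝ) ≤ (1 + A) * (1 + B) - 1 := by nlinarith
  have s123 : |(1 + ((1 + t1) * (1 + t2) - 1)) * (1 + t3) - 1| ≤
      (1 + ((1 + A) * (1 + B) - 1)) * (1 + C) - 1 := step _ _ _ _ s12 h3 hE2 hC0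
  have heq : (1 + ((1 + t1) * (1 + t2) - 1)) * (1 + t3) = (1 + t1) * (1 + t2) * (1 + t3) := by
    ring
  rw [heq] at s123
  refine s123.trans ?_
  -- (1+A)(1+B)(1+C) ≤ 1 + gam u N
  have h1A : 1 + A = 1 / (1 - (a:ℝ)*u) := by
    rw [hAdef]; unfold gam; field_simp; ring
  have h1B : 1 + B = 1 / (1 - (b:ℝ)*u) := by
    rw [hBdef]; unfold gam; field_simp; ring
  have h1C : 1 + C = 1 / (1 - (c:ℝ)*u) := by
    rw [hCdef]; unfold gam; field_simp; ring
  have h1N : 1 + gam u N = 1 / (1 - (N:ℝ)*u) := by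
    unfold gam; field_simp; ring
  have key : (1 + A) * (1 + B) * (1 + C) ≤ 1 + gam u N := by
    rw [h1A, h1B, h1C, h1N, div_mul_div_comm, div_mul_div_comm, one_mul, one_mul]
    apply one_div_le_one_div_of_le hdN
    nlinarith [mul_nonneg (mul_nonneg ha0 hb0) (le_of_lt hdc),
      mul_nonneg ha0 hc0, mul_nonneg hb0 hc0, mul_nonneg ha0 hb0]
  have hexp : (1 + ((1 + A) * (1 + B) - 1)) * (1 + C) - 1 = (1 + A) * (1 + B) * (1 + C) - 1 := by
    ring
  rw [hexp]
  linarith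

/-- Rounding error representation for `ŵ'_{k,m}`, the computed coefficient of
`x^m` in `∏_{j<k}(x−x_j)·∏_{j>k}(x−x_j)`, computed by the method of partial products:
`ŵ' = (−1)^{n−m} Σ_{I ⊆ {0,…,n}∖{k}, |I| = n−m} (∏_{i∈I} x_i)(1+θ_I)` with `|θ_I| ≤ γ_{2n+1}`. -/
theorem stmt_1 (u : ℝ) (hu : 0 < u) (hu1 : u < 1) (n k m : ℕ) (x : ℕ → ℝ)
    (hk : k ≤ n) (hm : m ≤ n) (hnu : ((2 * n + 1 : ℕ) : ℝ) * u < 1)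
    (SL SR : ℕ → ℝ) (w' : ℝ)
    (hSL : ∀ m₁ m₂ : ℕ, m₁ + m₂ = m → m₁ ≤ k → m₂ ≤ n - k →
      ∃ θ : Finset ℕ → ℝ,
        (∀ I ∈ (Finset.range k).powersetCard (k - m₁), |θ I| ≤ gam u (2 * (k - 1) - m₁)) ∧
        SL m₁ = ∑ I ∈ (Finset.range k).powersetCard (k - m₁), (∏ i ∈ I, x i) * (1 + θ I))
    (hSR : ∀ m₁ m₂ : ℕ, m₁ + m₂ = m → m₁ ≤ k → m₂ ≤ n - k →
      ∃ θ : Finset ℕ → ℝ,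
        (∀ J ∈ (Finset.Icc (k + 1) n).powersetCard (n - k - m₂),
          |θ J| ≤ gam u (2 * (n - k - 1) - m₂)) ∧
        SR m₂ = ∑ J ∈ (Finset.Icc (k + 1) n).powersetCard (n - k - m₂),
          (∏ j ∈ J, x j) * (1 + θ J))
    (hw' : ∃ φ : ℕ → ℝ,
      (∀ m₁ ∈ (Finset.range (m + 1)).filter (fun m₁ => m₁ ≤ k ∧ m - m₁ ≤ n - k),
        |φ m₁| ≤ gam u (m + 1)) ∧
      w' = (-1 : ℝ) ^ (n - m) *
        ∑ m₁ ∈ (Finset.range (m + 1)).filter (fun m₁ => m₁ ≤ k ∧ m - m₁ ≤ n - k),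
          SL m₁ * SR (m - m₁) * (1 + φ m₁)) :
    ∃ θ : Finset ℕ → ℝ,
      (∀ I ∈ ((Finset.range (n + 1)).erase k).powersetCard (n - m), |θ I| ≤ gam u (2 * n + 1)) ∧
      w' = (-1 : ℝ) ^ (n - m) *
        ∑ I ∈ ((Finset.range (n + 1)).erase k).powersetCard (n - m),
          (∏ i ∈ I, x i) * (1 + θ I) := by
  classical
  obtain ⟨φ, hφb, hwdef⟩ := hw'
  set A := Finset.range k with hA
  set B := Finset.Icc (k + 1) n with hB
  set F := (Finset.range (m + 1)).filter (fun m₁ => m₁ ≤ k ∧ m - m₁ ≤ n - k) with hF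
  set T := (Finset.range (n + 1)).erase k with hT
  have key : ∀ m₁ : ℕ, ∃ tL tR : Finset ℕ → ℝ, m₁ ∈ F →
      (∀ I ∈ A.powersetCard (k - m₁), |tL I| ≤ gam u (2 * (k - 1) - m₁)) ∧
      SL m₁ = ∑ I ∈ A.powersetCard (k - m₁), (∏ i ∈ I, x i) * (1 + tL I) ∧
      (∀ J ∈ B.powersetCard (n - k - (m - m₁)), |tR J| ≤ gam u (2 * (n - k - 1) - (m - m₁))) ∧
      SR (m - m₁) = ∑ J ∈ B.powersetCard (n - k - (m - m₁)), (∏ j ∈ J, x j) * (1 + tR J) := by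
    intro m₁
    by_cases h : m₁ ∈ F
    · rw [hF, Finset.mem_filter, Finset.mem_range] at h
      obtain ⟨tL, hL1, hL2⟩ := hSL m₁ (m - m₁) (by omega) h.2.1 h.2.2
      obtain ⟨tR, hR1, hR2⟩ := hSR m₁ (m - m₁) (by omega) h.2.1 h.2.2
      exact ⟨tL, tR, fun _ => ⟨hL1, hL2, hR1, hR2⟩⟩
    · exact ⟨0, 0, fun hmem => absurd hmem h⟩
  choose tL tR hkey using key
  -- membership facts for F
  have hFmem : ∀ m₁ ∈ F, m₁ ≤ m ∧ m₁ ≤ k ∧ m - m₁ ≤ n - k := by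
    intro m₁ h
    rw [hF, Finset.mem_filter, Finset.mem_range] at h
    exact ⟨by omega, h.2.1, h.2.2⟩
  -- disjointness of A and B
  have hABdisj : Disjoint A B := by
    rw [Finset.disjoint_left]
    intro a ha hb
    rw [hA, Finset.mem_range] at ha
    rw [hB, Finset.mem_Icc] at hb
    omega
  -- decomposition of I ∈ T.powersetCard (n - m)
  have hdec : ∀ I ∈ T.powersetCard (n - m),
      (k - (I ∩ A).card) ∈ F ∧
      (I ∩ A) ∈ A.powersetCard (k - (k - (I ∩ A).card)) ∧
      (I \ A) ∈ B.powersetCard (n - k - (m - (k - (I ∩ A).card))) := by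
    intro I hI
    rw [Finset.mem_powersetCard] at hI
    obtain ⟨hsub, hcard⟩ := hI
    have h1 : I ∩ A ⊆ A := Finset.inter_subset_right
    have hIA : (I ∩ A).card ≤ k := by
      have := Finset.card_le_card h1
      simpa [hA] using this
    have h2 : I \ A ⊆ B := by
      intro j hj
      rw [Finset.mem_sdiff] at hj
      have hjT := hsub hj.1
      rw [hT, Finset.mem_erase, Finset.mem_range] at hjT
      have hjA : ¬ j < k := by
        intro hlt; exact hj.2 (by rw [hA, Finset.mem_range]; exact hlt)
      rw [hB, Finset.mem_Icc]
      omega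
    have hIB : (I \ A).card ≤ n - k := by
      have := Finset.card_le_card h2
      rw [hB, Nat.card_Icc] at this
      omega
    have hsplit : (I ∩ A).card + (I \ A).card = n - m := by
      rw [Finset.card_inter_add_card_sdiff]; exact hcard
    refine ⟨?_, ?_, ?_⟩
    · rw [hF, Finset.mem_filter, Finset.mem_range]
      exact ⟨by omega, by omega, by omega⟩
    · rw [Finset.mem_powersetCard]
      exact ⟨h1, by omega⟩
    · rw [Finset.mem_powersetCard]
      exact ⟨h2, by omega⟩
  -- define θ
  refine ⟨fun I => (1 + tL (k - (I ∩ A).card) (I ∩ A)) *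
      (1 + tR (k - (I ∩ A).card) (I \ A)) * (1 + φ (k - (I ∩ A).card)) - 1, ?_, ?_⟩
  · -- bound
    intro I hI
    obtain ⟨hmF, hmL, hmR⟩ := hdec I hI
    set m₁ := k - (I ∩ A).card with hm₁
    have hb1 := (hkey m₁ hmF).1 _ hmL
    have hb3 := (hkey m₁ hmF).2.2.1 _ hmR
    have hb2 := hφb m₁ hmF
    obtain ⟨hc1, hc2, hc3⟩ := hFmem m₁ hmF
    have habc : (2 * (k - 1) - m₁) + (2 * (n - k - 1) - (m - m₁)) + (m + 1) ≤ 2 * n + 1 := by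
      omega
    have hres := gam_combine hu habc (by exact_mod_cast hnu) hb1 hb3 hb2
    beta_reduce
    exact hres
  · -- sum equality
    rw [hwdef]
    congr 1
    have step1 : ∀ m₁ ∈ F, SL m₁ * SR (m - m₁) * (1 + φ m₁) =
        ∑ p ∈ (A.powersetCard (k - m₁)) ×ˢ (B.powersetCard (n - k - (m - m₁))),
          ((∏ i ∈ p.1, x i) * (1 + tL m₁ p.1)) * ((∏ j ∈ p.2, x j) * (1 + tR m₁ p.2)) *
            (1 + φ m₁) := by
      intro m₁ hm₁
      rw [(hkey m₁ hm₁).2.1, (hkey m₁ hm₁).2.2.2, Finset.sum_product,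
        Finset.sum_mul_sum, Finset.sum_mul]
      exact Finset.sum_congr rfl fun i _ => by rw [Finset.sum_mul]
    rw [Finset.sum_congr rfl step1, Finset.sum_sigma']
    beta_reduce
    refine Finset.sum_nbij' (fun p => p.2.1 ∪ p.2.2)
      (fun I => ⟨k - (I ∩ A).card, (I ∩ A, I \ A)⟩) ?_ ?_ ?_ ?_ ?_
    · -- forward membership
      rintro ⟨m₁, I₁, I₂⟩ hp
      simp only [Finset.mem_sigma, Finset.mem_product] at hp
      dsimp only
      obtain ⟨hmF, hI₁, hI₂⟩ := hp
      rw [Finset.mem_powersetCard] at hI₁ hI₂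
      obtain ⟨hc1, hc2, hc3⟩ := hFmem m₁ hmF
      have hdisj : Disjoint I₁ I₂ := hABdisj.mono hI₁.1 hI₂.1
      rw [Finset.mem_powersetCard]
      constructor
      · intro a ha
        rw [Finset.mem_union] at ha
        rw [hT, Finset.mem_erase, Finset.mem_range]
        rcases ha with ha | ha
        · have := hI₁.1 ha; rw [hA, Finset.mem_range] at this; omega
        · have := hI₂.1 ha; rw [hB, Finset.mem_Icc] at this; omega
      · rw [Finset.card_union_of_disjoint hdisj, hI₁.2, hI₂.2]
        omega
    · -- backward membership
      intro I hI
      obtain ⟨hmF, hmL, hmR⟩ := hdec I hI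
      rw [Finset.mem_sigma, Finset.mem_product]
      exact ⟨hmF, hmL, hmR⟩
    · -- left inverse
      rintro ⟨m₁, I₁, I₂⟩ hp
      simp only [Finset.mem_sigma, Finset.mem_product] at hp
      dsimp only
      obtain ⟨hmF, hI₁, hI₂⟩ := hp
      rw [Finset.mem_powersetCard] at hI₁ hI₂
      obtain ⟨hc1, hc2, hc3⟩ := hFmem m₁ hmF
      have hI₂A : Disjoint I₂ A := Finset.disjoint_left.mpr
        fun a ha hb => Finset.disjoint_left.mp hABdisj hb (hI₂.1 ha)
      have e1 : (I₁ ∪ I₂) ∩ A = I₁ := by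
        rw [Finset.union_inter_distrib_right, Finset.inter_eq_left.2 hI₁.1,
          Finset.disjoint_iff_inter_eq_empty.mp hI₂A, Finset.union_empty]
      have e2 : (I₁ ∪ I₂) \ A = I₂ := by
        rw [Finset.union_sdiff_distrib, Finset.sdiff_eq_empty_iff_subset.2 hI₁.1,
          Finset.sdiff_eq_self_iff_disjoint.2 hI₂A, Finset.empty_union]
      have e3 : k - I₁.card = m₁ := by rw [hI₁.2]; omega
      simp only [e1, e2, e3]
    · -- right inverse
      intro I hI
      show (I ∩ A) ∪ (I \ A) = I
      rw [Finset.union_comm, Finset.sdiff_union_inter]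
    · -- values
      rintro ⟨m₁, I₁, I₂⟩ hp
      simp only [Finset.mem_sigma, Finset.mem_product] at hp
      dsimp only
      obtain ⟨hmF, hI₁, hI₂⟩ := hp
      rw [Finset.mem_powersetCard] at hI₁ hI₂
      obtain ⟨hc1, hc2, hc3⟩ := hFmem m₁ hmF
      have hdisj : Disjoint I₁ I₂ := hABdisj.mono hI₁.1 hI₂.1
      have hI₂A : Disjoint I₂ A := Finset.disjoint_left.mpr
        fun a ha hb => Finset.disjoint_left.mp hABdisj hb (hI₂.1 ha)
      have e1 : (I₁ ∪ I₂) ∩ A = I₁ := by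
        rw [Finset.union_inter_distrib_right, Finset.inter_eq_left.2 hI₁.1,
          Finset.disjoint_iff_inter_eq_empty.mp hI₂A, Finset.union_empty]
      have e2 : (I₁ ∪ I₂) \ A = I₂ := by
        rw [Finset.union_sdiff_distrib, Finset.sdiff_eq_empty_iff_subset.2 hI₁.1,
          Finset.sdiff_eq_self_iff_disjoint.2 hI₂A, Finset.empty_union]
      have e3 : k - I₁.card = m₁ := by rw [hI₁.2]; omega
      simp only [e1, e2, e3, Finset.prod_union hdisj]
      ring
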